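/- Let V be a vertex ring with canonical Hasse-Schmidt derivation (D_i). Then the skew-symmetry formula holds: for all u, v ∈ V and n ∈ ℤ, v(n)u = (-1)^{n+1} ∑_{i≥0} (-1)^i D_i(u(n+i)v), where the sum is finite by the truncation axiom. -/

import Mathlib

noncomputable section

/-- Binomial coefficient `C(m, n)` for integer `m` and natural `n`:
`C(m,n) = m(m-1)⋯(m-n+1)/n!`. -/
def ibin (m : ℤ) (n : ℕ) : ℤ :=
  if 0 ≤ m then ((m.toNat.choose n : ℕ) : ℤ)
  else (-1) ^ n * ((((n : ℤ) - m - 1).toNat.choose n : ℕ) : ℤ)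

/-- Binomial coefficient `C(m, n)` for integers `m, n`, zero when `n < 0`. -/
def ibinZ (m n : ℤ) : ℤ := if 0 ≤ n then ibin m n.toNat else 0

/-- A vertex ring structure on an additive abelian group `V`: biadditive
products `mul n u v = u(n)v` for all `n : ℤ`, a vacuum element `one = 𝟙`,
satisfying truncation, the vacuum axioms, and the Jacobi identity. -/
structure VertexRing (V : Type*) [AddCommGroup V] where
  mul : ℤ → V → V → V
  one : V
  add_left : ∀ (n : ℤ) (u u' v : V), mul n (u + u') v = mul n u v + mul n u' v
  add_right : ∀ (n : ℤ) (u v v' : V), mul n u (v + v') = mul n u v + mul n u v'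
  trunc : ∀ u v : V, ∃ n₀ : ℤ, 0 ≤ n₀ ∧ ∀ n : ℤ, n₀ ≤ n → mul n u v = 0
  vac_create : ∀ u : V, mul (-1) u one = u
  vac_ann : ∀ (u : V) (n : ℤ), 0 ≤ n → mul n u one = 0
  jacobi : ∀ (r s t : ℤ) (u v w : V),
      (∑ᶠ i : ℕ, ibin r i • mul (r + s - (i : ℤ)) (mul (t + (i : ℤ)) u v) w) =
      (∑ᶠ i : ℕ, ((-1) ^ i * ibin t i) •
        (mul (r + t - (i : ℤ)) u (mul (s + (i : ℤ)) v w)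
          - (((-1 : ℤˣ) ^ t : ℤˣ) : ℤ) • mul (s + t - (i : ℤ)) v (mul (r + (i : ℤ)) u w)))

/-- The canonical Hasse–Schmidt derivation of a vertex ring: `D m u = u(-m-1)𝟙`. -/
def VertexRing.D {V : Type*} [AddCommGroup V] (R : VertexRing V) (m : ℕ) (u : V) : V :=
  R.mul (-(m : ℤ) - 1) u R.one

/-- The center of a vertex ring: states whose vertex operator is the constant
`u(-1)`, i.e. `u(n) = 0` for all `n ≠ -1`. -/
def VertexRing.center {V : Type*} [AddCommGroup V] (R : VertexRing V) : Set V :=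
  {u | ∀ n : ℤ, n ≠ -1 → ∀ v : V, R.mul n u v = 0}

private lemma VertexRing.mul_zero_right {V : Type*} [AddCommGroup V] (R : VertexRing V)
    (n : ℤ) (u : V) : R.mul n u 0 = 0 := by
  have h := R.add_right n u 0 0
  rw [add_zero] at h
  exact (left_eq_add.mp h)

private lemma ibin_neg_one (i : ℕ) : ibin (-1) i = (-1) ^ i := by
  have : ((i : ℤ) - (-1) - 1).toNat = i := by omega
  simp [ibin, this]

private lemma ibin_zero (m : ℤ) : ibin m 0 = 1 := by
  unfold ibin
  split <;> simp

/-- Skew-symmetry: `v(n)u = (-1)^{n+1} ∑_{i≥0} (-1)^i D_i(u(n+i)v)`. -/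
theorem skew_symmetry {V : Type*} [AddCommGroup V] (R : VertexRing V) (u v : V) (n : ℤ) :
    R.mul n v u
      = (((-1 : ℤˣ) ^ (n + 1) : ℤˣ) : ℤ) •
          ∑ᶠ i : ℕ, ((-1 : ℤ) ^ i) • R.D i (R.mul (n + (i : ℤ)) u v) := by
  have hJ := R.jacobi (-1) 0 n u v R.one
  -- simplify the left side of Jacobi
  have hL : (∑ᶠ i : ℕ, ibin (-1) i • R.mul (-1 + 0 - (i : ℤ)) (R.mul (n + (i : ℤ)) u v) R.one)
      = ∑ᶠ i : ℕ, ((-1 : ℤ) ^ i) • R.D i (R.mul (n + (i : ℤ)) u v) := by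
    apply finsum_congr
    intro i
    rw [ibin_neg_one, show (-1 + 0 - (i : ℤ)) = (-(i : ℤ) - 1) by ring]
    rfl
  -- simplify the right side of Jacobi
  have hR : (∑ᶠ i : ℕ, ((-1) ^ i * ibin n i) •
        (R.mul (-1 + n - (i : ℤ)) u (R.mul (0 + (i : ℤ)) v R.one)
          - (((-1 : ℤˣ) ^ n : ℤˣ) : ℤ) • R.mul (0 + n - (i : ℤ)) v (R.mul (-1 + (i : ℤ)) u R.one)))
      = -((((-1 : ℤˣ) ^ n : ℤˣ) : ℤ) • R.mul n v u) := by
    rw [finsum_eq_single _ 0]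
    · rw [ibin_zero]
      have h1 : R.mul (0 + (0 : ℕ) : ℤ) v R.one = 0 := by
        simpa using R.vac_ann v 0 le_rfl
      have h2 : R.mul (-1 + ((0 : ℕ) : ℤ)) u R.one = u := by
        simpa using R.vac_create u
      rw [h1, h2, R.mul_zero_right]
      simp
    · intro i hi
      have hi1 : 1 ≤ i := Nat.one_le_iff_ne_zero.mpr hi
      have h1 : R.mul (0 + (i : ℤ)) v R.one = 0 := R.vac_ann v _ (by positivity)
      have h2 : R.mul (-1 + (i : ℤ)) u R.one = 0 := R.vac_ann u _ (by omega)
      rw [h1, h2, R.mul_zero_right, R.mul_zero_right]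
      simp
  rw [hL, hR] at hJ
  rw [hJ, smul_neg, smul_smul, ← Units.val_mul]
  have key : ((-1 : ℤˣ) ^ (n + 1)) * ((-1 : ℤˣ) ^ n) = -1 := by
    rw [zpow_add, zpow_one]
    calc (-1 : ℤˣ) ^ n * -1 * (-1 : ℤˣ) ^ n
        = ((-1 : ℤˣ) ^ n * (-1 : ℤˣ) ^ n) * -1 := mul_right_comm _ _ _
      _ = -1 := by rw [Int.units_mul_self, one_mul]
  rw [key]
  simp
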